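/- arXiv:2111.12610 — 2 statements merged into one kernel-verified Lean document; each statement's English description precedes it below -/
import Mathlib

section
/- Let V = ℝ^d×{0} ⊆ ℝ^{2n} and suppose r₁ ≥ r₂ > 0. For every p = (x,y,z) in the type-1 rectangle R̄_{1,V}(0,r), the Heisenberg distance from p to its horizontal projection P_𝕍(p) = (x^d, 0, 0) satisfies d_H(P_𝕍(p), p) ≤ 3·(r₁r₂)^{1/2}. -/
open scoped RealInnerProductSpace

/-- The underlying set of the Heisenberg group `ℍⁿ = ℝⁿ × ℝⁿ × ℝ`. -/
abbrev Heis (n : ℕ) := EuclideanSpace ℝ (Fin n) × EuclideanSpace ℝ (Fin n) × ℝ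

/-- The Heisenberg group operation. -/
noncomputable def hMul {n : ℕ} (p p' : Heis n) : Heis n :=
  (p.1 + p'.1, p.2.1 + p'.2.1,
    p.2.2 + p'.2.2 + 2 * (⟪p.1, p'.2.1⟫ - ⟪p.2.1, p'.1⟫))

/-- The Heisenberg group inverse. -/
def hInv {n : ℕ} (p : Heis n) : Heis n := (-p.1, -p.2.1, -p.2.2)

/-- `|(a,b)|`, the Euclidean norm of a pair of vectors viewed in `ℝ^{2n}`. -/
noncomputable def pnorm {n : ℕ} (a b : EuclideanSpace ℝ (Fin n)) : ℝ :=
  Real.sqrt (‖a‖ ^ 2 + ‖b‖ ^ 2)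

/-- The homogeneous (Korányi) norm. -/
noncomputable def hNorm {n : ℕ} (p : Heis n) : ℝ :=
  (pnorm p.1 p.2.1 ^ 4 + p.2.2 ^ 2) ^ ((1 : ℝ) / 4)

/-- The left-invariant Heisenberg metric `d_ℍ(p,p') = ‖p⁻¹ * p'‖_ℍ`. -/
noncomputable def dH {n : ℕ} (p p' : Heis n) : ℝ := hNorm (hMul (hInv p) p')

/-- `x ↦ x^d = (x₁,…,x_d,0,…,0)`. -/
noncomputable def trunc {n : ℕ} (d : ℕ) (x : EuclideanSpace ℝ (Fin n)) :
    EuclideanSpace ℝ (Fin n) :=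
  WithLp.toLp 2 (fun i : Fin n => if (i : ℕ) < d then x i else 0)

/-- `x ↦ x⊥ = (0,…,0,x_{d+1},…,x_n)`. -/
noncomputable def truncPerp {n : ℕ} (d : ℕ) (x : EuclideanSpace ℝ (Fin n)) :
    EuclideanSpace ℝ (Fin n) :=
  WithLp.toLp 2 (fun i : Fin n => if (i : ℕ) < d then 0 else x i)

/-- The type-1 rectangle `R̄_{1,V}(0,r)` for `V = ℝ^d × {0}`. -/
noncomputable def rect1 (n d : ℕ) (r₁ r₂ : ℝ) : Set (Heis n) :=
  {p | ‖trunc d p.1‖ ≤ r₁ ∧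
    pnorm (truncPerp d p.1) p.2.1 ^ 4 +
      |p.2.2 + 2 * ⟪trunc d p.1, trunc d p.2.1⟫| ^ 2 ≤ r₂ ^ 4}

/-- The type-2 rectangle `R̄_{2,V}(0,r)` for `V = ℝ^d × {0}`. -/
noncomputable def rect2 (n d : ℕ) (r₁ r₂ : ℝ) : Set (Heis n) :=
  {p | ‖trunc d p.1‖ ≤ r₁ ∧
    pnorm (truncPerp d p.1) p.2.1 ^ 4 +
      |p.2.2 - 2 * ⟪trunc d p.1, trunc d p.2.1⟫| ^ 2 ≤ r₂ ^ 4}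

set_option maxHeartbeats 1000000 in
theorem rect1_dist_to_horizontal_projection {n d : ℕ} (hd : d ≤ n) {r₁ r₂ : ℝ}
    (hr₂ : 0 < r₂) (hr : r₂ ≤ r₁) (p : Heis n) (hp : p ∈ rect1 n d r₁ r₂) :
    dH (trunc d p.1, (0 : EuclideanSpace ℝ (Fin n)), (0 : ℝ)) p ≤ 3 * Real.sqrt (r₁ * r₂) := by
  obtain ⟨h1, h2⟩ := hp
  set x := p.1 with hx
  set y := p.2.1 with hy
  set z := p.2.2 with hz
  -- inner product truncation
  have hinner : ⟪trunc d x, y⟫ = ⟪trunc d x, trunc d y⟫ := by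
    simp only [PiLp.inner_apply, RCLike.inner_apply, starRingEnd_apply, star_trivial]
    refine Finset.sum_congr rfl fun i _ => ?_
    by_cases h : (i : ℕ) < d <;> simp [trunc, h]
  have hperp : -trunc d x + x = truncPerp d x := by
    ext i
    simp only [PiLp.add_apply, PiLp.neg_apply]
    by_cases h : (i : ℕ) < d <;> simp [trunc, truncPerp, h]
  have hdH : dH (trunc d x, (0 : EuclideanSpace ℝ (Fin n)), (0 : ℝ)) p
      = (pnorm (truncPerp d x) y ^ 4 + (z - 2 * ⟪trunc d x, trunc d y⟫) ^ 2)
        ^ ((1 : ℝ) / 4) := by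
    simp only [dH, hMul, hInv, hNorm, neg_zero, zero_add, inner_neg_left, inner_zero_left,
      ← hx, ← hy, ← hz, hperp, hinner]
    ring_nf
  rw [hdH]
  set pn := pnorm (truncPerp d x) y with hpn
  have hpn0 : 0 ≤ pn := Real.sqrt_nonneg _
  set I := ⟪trunc d x, trunc d y⟫ with hI
  have hr₁ : (0 : ℝ) < r₁ := lt_of_lt_of_le hr₂ hr
  -- bounds from membership
  have hpn4 : pn ^ 4 ≤ r₂ ^ 4 := le_trans (le_add_of_nonneg_right (by positivity)) h2
  have hpnr : pn ≤ r₂ := le_of_pow_le_pow_left₀ (by norm_num) hr₂.le hpn4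
  have habs2 : |z + 2 * I| ^ 2 ≤ (r₂ ^ 2) ^ 2 := by
    have := le_trans (le_add_of_nonneg_left (by positivity : (0:ℝ) ≤ pn ^ 4)) h2
    calc |z + 2 * I| ^ 2 ≤ r₂ ^ 4 := this
    _ = (r₂ ^ 2) ^ 2 := by ring
  have habs : |z + 2 * I| ≤ r₂ ^ 2 :=
    le_of_pow_le_pow_left₀ two_ne_zero (by positivity) habs2
  -- bound on the inner product
  have hyn : ‖y‖ ≤ pn := by
    rw [hpn, pnorm]
    calc ‖y‖ = Real.sqrt (‖y‖ ^ 2) := by rw [Real.sqrt_sq (norm_nonneg _)]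
    _ ≤ _ := Real.sqrt_le_sqrt (le_add_of_nonneg_left (by positivity))
  have htyn : ‖trunc d y‖ ≤ ‖y‖ := by
    rw [EuclideanSpace.norm_eq, EuclideanSpace.norm_eq]
    apply Real.sqrt_le_sqrt
    apply Finset.sum_le_sum
    intro i _
    by_cases h : (i : ℕ) < d <;> simp [trunc, h] <;> positivity
  have hIb : |I| ≤ r₁ * r₂ := by
    calc |I| ≤ ‖trunc d x‖ * ‖trunc d y‖ := abs_real_inner_le_norm _ _
    _ ≤ r₁ * r₂ := by
        apply mul_le_mul h1 (le_trans htyn (le_trans hyn hpnr)) (norm_nonneg _) hr₁.le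
  -- |z - 2I| ≤ 5 r₁ r₂
  have hC : |z - 2 * I| ≤ 5 * (r₁ * r₂) := by
    have : |z - 2 * I| ≤ |z + 2 * I| + 4 * |I| := by
      calc |z - 2 * I| = |(z + 2 * I) + (-4) * I| := by ring_nf
      _ ≤ |z + 2 * I| + |(-4) * I| := abs_add_le _ _
      _ = |z + 2 * I| + 4 * |I| := by rw [abs_mul]; norm_num
    calc |z - 2 * I| ≤ |z + 2 * I| + 4 * |I| := this
    _ ≤ r₂ ^ 2 + 4 * (r₁ * r₂) := by linarith
    _ ≤ 5 * (r₁ * r₂) := by nlinarith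
  -- final bound
  have hsq : Real.sqrt (r₁ * r₂) ^ 2 = r₁ * r₂ := Real.sq_sqrt (by positivity)
  have hM0 : 0 ≤ 3 * Real.sqrt (r₁ * r₂) := by positivity
  have hX : pn ^ 4 + (z - 2 * I) ^ 2 ≤ (3 * Real.sqrt (r₁ * r₂)) ^ 4 := by
    have h25 : (z - 2 * I) ^ 2 ≤ 25 * (r₁ * r₂) ^ 2 := by
      have := abs_nonneg (z - 2 * I)
      calc (z - 2 * I) ^ 2 = |z - 2 * I| ^ 2 := (sq_abs _).symm
      _ ≤ (5 * (r₁ * r₂)) ^ 2 := by nlinarith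
      _ = 25 * (r₁ * r₂) ^ 2 := by ring
    have hrr : r₂ * r₂ ≤ r₁ * r₁ := mul_le_mul hr hr hr₂.le hr₁.le
    have hpn4' : pn ^ 4 ≤ (r₁ * r₂) ^ 2 := by
      nlinarith [mul_le_mul_of_nonneg_right hrr (mul_pos hr₂ hr₂).le]
    nlinarith [Real.sqrt_nonneg (r₁ * r₂), sq_nonneg (r₁ * r₂)]
  calc (pn ^ 4 + (z - 2 * I) ^ 2) ^ ((1:ℝ)/4)
      ≤ ((3 * Real.sqrt (r₁ * r₂)) ^ 4) ^ ((1:ℝ)/4) :=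
        Real.rpow_le_rpow (by positivity) hX (by norm_num)
  _ = 3 * Real.sqrt (r₁ * r₂) := by
      rw [← Real.rpow_natCast (3 * Real.sqrt (r₁ * r₂)) 4, ← Real.rpow_mul hM0]
      norm_num
end

section
/- Let r₁ ≥ r₂ > 0, V = ℝ^d×{0}, and let ρ ∈ [r₂²/r₁, r₂]. If p ∈ R̄_{1,V}(0,r) and p' ∈ B(p, ρ) (Heisenberg ball), then |x'^d| ≤ 2r₁, |(x'⊥, y')| ≤ 2r₂, and |z' + 2⟨x'^d, y'^d⟩| ≤ 16 r₁ ρ. -/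
open scoped RealInnerProductSpace

lemma trunc_add {n d : ℕ} (x y : EuclideanSpace ℝ (Fin n)) :
    trunc d (x + y) = trunc d x + trunc d y := by
  ext i
  simp only [trunc, PiLp.add_apply, PiLp.toLp_apply]
  split <;> simp

lemma truncPerp_add {n d : ℕ} (x y : EuclideanSpace ℝ (Fin n)) :
    truncPerp d (x + y) = truncPerp d x + truncPerp d y := by
  ext i
  simp only [truncPerp, PiLp.add_apply, PiLp.toLp_apply]
  split <;> simp

lemma trunc_add_truncPerp {n d : ℕ} (x : EuclideanSpace ℝ (Fin n)) :
    trunc d x + truncPerp d x = x := by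
  ext i
  simp only [trunc, truncPerp, PiLp.add_apply, PiLp.toLp_apply]
  split <;> simp

lemma norm_trunc_le {n d : ℕ} (x : EuclideanSpace ℝ (Fin n)) : ‖trunc d x‖ ≤ ‖x‖ := by
  rw [EuclideanSpace.norm_eq, EuclideanSpace.norm_eq]
  apply Real.sqrt_le_sqrt
  apply Finset.sum_le_sum
  intro i _
  simp only [trunc, PiLp.toLp_apply]
  split <;> simp [sq_nonneg]

lemma norm_truncPerp_le {n d : ℕ} (x : EuclideanSpace ℝ (Fin n)) : ‖truncPerp d x‖ ≤ ‖x‖ := by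
  rw [EuclideanSpace.norm_eq, EuclideanSpace.norm_eq]
  apply Real.sqrt_le_sqrt
  apply Finset.sum_le_sum
  intro i _
  simp only [truncPerp, PiLp.toLp_apply]
  split <;> simp [sq_nonneg]

lemma pnorm_nonneg' {n : ℕ} (a b : EuclideanSpace ℝ (Fin n)) : 0 ≤ pnorm a b :=
  Real.sqrt_nonneg _

lemma norm_fst_le_pnorm {n : ℕ} (a b : EuclideanSpace ℝ (Fin n)) : ‖a‖ ≤ pnorm a b := by
  rw [pnorm, Real.le_sqrt (norm_nonneg a)]
  · nlinarith [sq_nonneg ‖b‖]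
  · positivity

lemma norm_snd_le_pnorm {n : ℕ} (a b : EuclideanSpace ℝ (Fin n)) : ‖b‖ ≤ pnorm a b := by
  rw [pnorm, Real.le_sqrt (norm_nonneg b)]
  · nlinarith [sq_nonneg ‖a‖]
  · positivity

lemma sqrt_ineq {p q r s : ℝ} (hp : 0 ≤ p) (hq : 0 ≤ q) (hr : 0 ≤ r) (hs : 0 ≤ s) :
    Real.sqrt ((p+q)^2 + (r+s)^2) ≤ Real.sqrt (p^2+r^2) + Real.sqrt (q^2+s^2) := by
  set A := Real.sqrt (p^2+r^2) with hA
  set B := Real.sqrt (q^2+s^2) with hB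
  have hA2 : A^2 = p^2+r^2 := Real.sq_sqrt (by positivity)
  have hB2 : B^2 = q^2+s^2 := Real.sq_sqrt (by positivity)
  have hAn : 0 ≤ A := Real.sqrt_nonneg _
  have hBn : 0 ≤ B := Real.sqrt_nonneg _
  have key : p*q + r*s ≤ A*B := by
    have h1 : (p*q+r*s)^2 ≤ (A*B)^2 := by
      rw [mul_pow, hA2, hB2]; nlinarith [sq_nonneg (p*s - r*q)]
    nlinarith [mul_nonneg hAn hBn, mul_nonneg hp hq, mul_nonneg hr hs]
  have : (p+q)^2 + (r+s)^2 ≤ (A+B)^2 := by nlinarith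
  calc Real.sqrt ((p+q)^2 + (r+s)^2) ≤ Real.sqrt ((A+B)^2) := Real.sqrt_le_sqrt this
    _ = A + B := Real.sqrt_sq (by positivity)

lemma pnorm_add_le {n : ℕ} (a a' b b' : EuclideanSpace ℝ (Fin n)) :
    pnorm (a + a') (b + b') ≤ pnorm a b + pnorm a' b' := by
  calc pnorm (a + a') (b + b')
      ≤ Real.sqrt ((‖a‖+‖a'‖)^2 + (‖b‖+‖b'‖)^2) := by
        apply Real.sqrt_le_sqrt
        have h1 := norm_add_le a a'
        have h2 := norm_add_le b b'
        nlinarith [norm_nonneg (a+a'), norm_nonneg (b+b'), norm_nonneg a, norm_nonneg a',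
          norm_nonneg b, norm_nonneg b']
    _ ≤ pnorm a b + pnorm a' b' :=
        sqrt_ineq (norm_nonneg a) (norm_nonneg a') (norm_nonneg b) (norm_nonneg b')

lemma pnorm_mono {n : ℕ} {a a' b b' : EuclideanSpace ℝ (Fin n)}
    (h1 : ‖a‖ ≤ ‖a'‖) (h2 : ‖b‖ ≤ ‖b'‖) : pnorm a b ≤ pnorm a' b' := by
  apply Real.sqrt_le_sqrt
  have := norm_nonneg a; have := norm_nonneg b
  nlinarith

set_option maxHeartbeats 1000000 in
theorem rect1_ball_coordinate_bounds_large_r1 {n d : ℕ} (hd : d ≤ n) {r₁ r₂ ρ : ℝ}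
    (hr₂ : 0 < r₂) (hr : r₂ ≤ r₁) (hρ₁ : r₂ ^ 2 / r₁ ≤ ρ) (hρ₂ : ρ ≤ r₂)
    (p p' : Heis n) (hp : p ∈ rect1 n d r₁ r₂) (hp' : dH p p' < ρ) :
    ‖trunc d p'.1‖ ≤ 2 * r₁ ∧
    pnorm (truncPerp d p'.1) p'.2.1 ≤ 2 * r₂ ∧
    |p'.2.2 + 2 * ⟪trunc d p'.1, trunc d p'.2.1⟫| ≤ 16 * r₁ * ρ := by
  have hr₁ : (0:ℝ) < r₁ := lt_of_lt_of_le hr₂ hr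
  have hρ : (0:ℝ) < ρ := lt_of_lt_of_le (div_pos (pow_pos hr₂ 2) hr₁) hρ₁
  have hr₂ρ : r₂ ^ 2 ≤ r₁ * ρ := by
    rw [div_le_iff₀ hr₁] at hρ₁; linarith [hρ₁]
  -- components of p⁻¹ * p'
  set u : EuclideanSpace ℝ (Fin n) := p'.1 - p.1 with hu
  set v : EuclideanSpace ℝ (Fin n) := p'.2.1 - p.2.1 with hv
  set w : ℝ := p'.2.2 - p.2.2 - 2*⟪p.1, p'.2.1⟫ + 2*⟪p.2.1, p'.1⟫ with hw
  have hq1 : (hMul (hInv p) p').1 = u := by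
    show -p.1 + p'.1 = u
    rw [hu]; abel
  have hq2 : (hMul (hInv p) p').2.1 = v := by
    show -p.2.1 + p'.2.1 = v
    rw [hv]; abel
  have hq3 : (hMul (hInv p) p').2.2 = w := by
    show -p.2.2 + p'.2.2 + 2 * (⟪-p.1, p'.2.1⟫ - ⟪-p.2.1, p'.1⟫) = w
    rw [hw]; simp [inner_neg_left]; ring
  have hS0 : 0 ≤ pnorm u v ^ 4 + w ^ 2 := by positivity
  have hS : pnorm u v ^ 4 + w ^ 2 < ρ ^ 4 := by
    have h1 : dH p p' = (pnorm u v ^ 4 + w ^ 2) ^ ((1:ℝ)/4) := by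
      rw [dH, hNorm, hq1, hq2, hq3]
    rw [h1] at hp'
    have h2 : pnorm u v ^ 4 + w ^ 2 = ((pnorm u v ^ 4 + w ^ 2) ^ ((1:ℝ)/4)) ^ (4:ℕ) := by
      rw [← Real.rpow_natCast ((pnorm u v ^ 4 + w ^ 2) ^ ((1:ℝ)/4)) 4, ← Real.rpow_mul hS0]
      norm_num
    rw [h2]
    exact pow_lt_pow_left₀ hp' (Real.rpow_nonneg hS0 _) (by norm_num)
  have hpnuv : pnorm u v ≤ ρ := by
    have h4 : pnorm u v ^ 4 ≤ ρ ^ 4 := by nlinarith [sq_nonneg w]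
    exact le_of_pow_le_pow_left₀ (by norm_num) hρ.le h4
  have hwρ : |w| ≤ ρ ^ 2 := by
    have h1 : w ^ 2 ≤ (ρ^2) ^ 2 := by nlinarith [pow_nonneg (pnorm_nonneg' u v) 4]
    calc |w| = Real.sqrt (w^2) := (Real.sqrt_sq_eq_abs w).symm
      _ ≤ Real.sqrt ((ρ^2)^2) := Real.sqrt_le_sqrt h1
      _ = ρ^2 := Real.sqrt_sq (by positivity)
  have hunorm : ‖u‖ ≤ ρ := (norm_fst_le_pnorm u v).trans hpnuv
  have hvnorm : ‖v‖ ≤ ρ := (norm_snd_le_pnorm u v).trans hpnuv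
  -- facts from hp
  obtain ⟨hpx, hpr⟩ := hp
  set A : ℝ := p.2.2 + 2 * ⟪trunc d p.1, trunc d p.2.1⟫ with hA
  have hApn : pnorm (truncPerp d p.1) p.2.1 ≤ r₂ := by
    have h4 : pnorm (truncPerp d p.1) p.2.1 ^ 4 ≤ r₂ ^ 4 := by nlinarith [sq_nonneg |A|]
    exact le_of_pow_le_pow_left₀ (by norm_num) hr₂.le h4
  have hAle : |A| ≤ r₂ ^ 2 := by
    have h1 : |A| ^ 2 ≤ (r₂^2)^2 := by
      have h0 : (r₂^2)^2 = r₂^4 := by ring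
      rw [h0]; linarith [pow_nonneg (pnorm_nonneg' (truncPerp d p.1) p.2.1) 4]
    calc |A| = Real.sqrt (|A|^2) := by rw [Real.sqrt_sq (abs_nonneg A)]
      _ ≤ Real.sqrt ((r₂^2)^2) := Real.sqrt_le_sqrt h1
      _ = r₂^2 := Real.sqrt_sq (by positivity)
  have hynorm : ‖p.2.1‖ ≤ r₂ := (norm_snd_le_pnorm _ _).trans hApn
  have hxperp : ‖truncPerp d p.1‖ ≤ r₂ := (norm_fst_le_pnorm _ _).trans hApn
  -- decompositions
  have hx' : p'.1 = p.1 + u := by rw [hu]; abel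
  have hy' : p'.2.1 = p.2.1 + v := by rw [hv]; abel
  have e1 : trunc d p'.1 = trunc d p.1 + trunc d u := by rw [hx', trunc_add]
  have e2 : trunc d p'.2.1 = trunc d p.2.1 + trunc d v := by rw [hy', trunc_add]
  refine ⟨?_, ?_, ?_⟩
  · rw [e1]
    calc ‖trunc d p.1 + trunc d u‖ ≤ ‖trunc d p.1‖ + ‖trunc d u‖ := norm_add_le _ _
      _ ≤ r₁ + ρ := add_le_add hpx ((norm_trunc_le u).trans hunorm)
      _ ≤ 2 * r₁ := by linarith
  · have e3 : truncPerp d p'.1 = truncPerp d p.1 + truncPerp d u := by rw [hx', truncPerp_add]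
    rw [e3, hy']
    calc pnorm (truncPerp d p.1 + truncPerp d u) (p.2.1 + v)
        ≤ pnorm (truncPerp d p.1) p.2.1 + pnorm (truncPerp d u) v := pnorm_add_le _ _ _ _
      _ ≤ r₂ + pnorm u v := add_le_add hApn (pnorm_mono (norm_truncPerp_le u) le_rfl)
      _ ≤ r₂ + ρ := by linarith
      _ ≤ 2 * r₂ := by linarith
  · -- the z-coordinate
    have key : p'.2.2 + 2 * ⟪trunc d p'.1, trunc d p'.2.1⟫ =
        A + w + 2*⟪p.1, v⟫ - 2*⟪p.2.1, u⟫ + 2*⟪trunc d u, trunc d p.2.1⟫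
          + 2*⟪trunc d p.1, trunc d v⟫ + 2*⟪trunc d u, trunc d v⟫ := by
      rw [e1, e2, hA, hw, hy', hx']
      simp only [inner_add_left, inner_add_right]
      rw [real_inner_comm p.2.1 p.1]
      ring
    have hxv : |⟪p.1, v⟫| ≤ r₁ * ρ + r₂ * ρ := by
      have hsplit : ⟪p.1, v⟫ = ⟪trunc d p.1, v⟫ + ⟪truncPerp d p.1, v⟫ := by
        rw [← inner_add_left, trunc_add_truncPerp]
      rw [hsplit]
      calc |⟪trunc d p.1, v⟫ + ⟪truncPerp d p.1, v⟫|
          ≤ |⟪trunc d p.1, v⟫| + |⟪truncPerp d p.1, v⟫| := abs_add_le _ _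
        _ ≤ ‖trunc d p.1‖ * ‖v‖ + ‖truncPerp d p.1‖ * ‖v‖ :=
            add_le_add (abs_real_inner_le_norm _ _) (abs_real_inner_le_norm _ _)
        _ ≤ r₁ * ρ + r₂ * ρ := by
            apply add_le_add <;>
              exact mul_le_mul (by assumption) hvnorm (norm_nonneg _) (by linarith)
    have hyu : |⟪p.2.1, u⟫| ≤ r₂ * ρ :=
      (abs_real_inner_le_norm _ _).trans
        (mul_le_mul hynorm hunorm (norm_nonneg _) hr₂.le)
    have hUY : |⟪trunc d u, trunc d p.2.1⟫| ≤ ρ * r₂ :=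
      (abs_real_inner_le_norm _ _).trans
        (mul_le_mul ((norm_trunc_le u).trans hunorm) ((norm_trunc_le p.2.1).trans hynorm)
          (norm_nonneg _) hρ.le)
    have hXV : |⟪trunc d p.1, trunc d v⟫| ≤ r₁ * ρ :=
      (abs_real_inner_le_norm _ _).trans
        (mul_le_mul hpx ((norm_trunc_le v).trans hvnorm) (norm_nonneg _) hr₁.le)
    have hUV : |⟪trunc d u, trunc d v⟫| ≤ ρ * ρ :=
      (abs_real_inner_le_norm _ _).trans
        (mul_le_mul ((norm_trunc_le u).trans hunorm) ((norm_trunc_le v).trans hvnorm)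
          (norm_nonneg _) hρ.le)
    rw [key, abs_le]
    rw [abs_le] at hAle hwρ hxv hyu hUY hXV hUV
    have hρ2 : ρ ^ 2 ≤ r₂ * ρ := by nlinarith
    have hρr : ρ * ρ ≤ r₂ * ρ := by nlinarith
    have hrr : r₂ * ρ ≤ r₁ * ρ := by nlinarith
    constructor <;>
      linarith [hAle.1, hAle.2, hwρ.1, hwρ.2, hxv.1, hxv.2, hyu.1, hyu.2, hUY.1, hUY.2,
        hXV.1, hXV.2, hUV.1, hUV.2]
end
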